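/- Let b > 1 be a real algebraic integer whose minimal polynomial p over ℚ has no complex root of modulus greater than b. Let m be the number of complex roots of p of modulus exactly b, and let ω ∈ ℂ be a primitive m-th root of unity. Then the set of complex roots of p is closed under multiplication by ω: if z is a root of p (viewed over ℂ), then ωz is also a root of p. -/

import Mathlib

open scoped Classical

open Polynomial IntermediateField

theorem roots_closed_under_primitive_root_mul
    (b : ℝ) (hb : 1 < b) (hint : IsIntegral ℤ b)
    (hroots : ∀ z ∈ ((minpoly ℚ b).map (algebraMap ℚ ℂ)).roots, ‖z‖ ≤ b)
    (m : ℕ)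
    (hm : m = Multiset.card
      (((minpoly ℚ b).map (algebraMap ℚ ℂ)).roots.filter (fun z => ‖z‖ = b)))
    (ω : ℂ) (hω : IsPrimitiveRoot ω m) :
    ∀ z ∈ ((minpoly ℚ b).map (algebraMap ℚ ℂ)).roots,
      ω * z ∈ ((minpoly ℚ b).map (algebraMap ℚ ℂ)).roots := by
  have hb0 : (0:ℝ) < b := lt_trans one_pos hb
  have hbQ : IsIntegral ℚ b := hint.tower_top
  set p : Polynomial ℚ := minpoly ℚ b with hp
  have hpmonic : p.Monic := minpoly.monic hbQ
  have hp0 : p ≠ 0 := hpmonic.ne_zero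
  set P : Polynomial ℂ := p.map (algebraMap ℚ ℂ) with hP
  have hP0 : P ≠ 0 := (Polynomial.map_ne_zero_iff (algebraMap ℚ ℂ).injective).mpr hp0
  -- membership in roots ↔ aeval = 0
  have memS : ∀ z : ℂ, z ∈ P.roots ↔ Polynomial.aeval z p = 0 := by
    intro z
    rw [Polynomial.mem_roots hP0, Polynomial.IsRoot, Polynomial.eval_map,
      Polynomial.aeval_def]
  -- b is a root
  have hbroot : Polynomial.aeval ((b:ℂ)) p = 0 := by
    have : ((b:ℂ)) = algebraMap ℝ ℂ b := rfl
    rw [this, Polynomial.aeval_algebraMap_apply, minpoly.aeval, map_zero]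
  have hbmem : ((b:ℂ)) ∈ P.roots := (memS _).mpr hbroot
  -- roots are closed under conjugation
  have hconjroot : ∀ z : ℂ, Polynomial.aeval z p = 0 →
      Polynomial.aeval ((starRingEnd ℂ) z) p = 0 := by
    intro z hz
    have := Polynomial.aeval_algHom_apply
      ((Complex.conjAe.toAlgHom : ℂ →ₐ[ℝ] ℂ).restrictScalars ℚ) z p
    rw [hz, map_zero] at this
    exact this
  -- roots have no duplicates
  have hsep : P.Separable := ((minpoly.irreducible hbQ).separable).map
  have hnodup : P.roots.Nodup := Polynomial.nodup_roots hsep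
  -- the finset of roots of maximal modulus
  set Mfin : Finset ℂ := (P.roots.filter (fun z => ‖z‖ = b)).toFinset with hMfin
  have hMfin_mem : ∀ z : ℂ, z ∈ Mfin ↔ (Polynomial.aeval z p = 0 ∧ ‖z‖ = b) := by
    intro z
    rw [hMfin, Multiset.mem_toFinset, Multiset.mem_filter, memS]
  have hMcard : Mfin.card = m := by
    rw [hMfin, Finset.card_def, Multiset.toFinset_val,
      Multiset.dedup_eq_self.mpr (hnodup.filter _), hm]
  have hbM : ((b:ℂ)) ∈ Mfin := by
    rw [hMfin_mem]
    exact ⟨hbroot, by rw [Complex.norm_real, Real.norm_eq_abs, abs_of_pos hb0]⟩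
  have hm0 : m ≠ 0 := by
    intro h
    rw [h, Finset.card_eq_zero] at hMcard
    rw [hMcard] at hbM
    exact absurd hbM (Finset.notMem_empty _)
  -- the field generated by the roots
  set E : IntermediateField ℚ ℂ := IntermediateField.adjoin ℚ (p.rootSet ℂ) with hE
  have hrootE : ∀ z : ℂ, Polynomial.aeval z p = 0 → z ∈ E := by
    intro z hz
    exact IntermediateField.subset_adjoin ℚ _ ((Polynomial.mem_rootSet' ).mpr ⟨hP0, hz⟩)
  have halg : Algebra.IsAlgebraic ℚ E := by
    rw [hE]
    refine IntermediateField.isAlgebraic_adjoin ?_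
    intro x hx
    exact (isAlgebraic_of_mem_rootSet hx).isIntegral
  have hbE : ((b:ℂ)) ∈ E := hrootE _ hbroot
  set bE : E := ⟨(b:ℂ), hbE⟩ with hbEdef
  have hbEcoe : (algebraMap E ℂ) bE = (b:ℂ) := rfl
  have hbC0 : ((b:ℂ)) ≠ 0 := by
    simpa using hb0.ne'
  have hminbE : minpoly ℚ bE = p := by
    have h1 : minpoly ℚ ((b:ℂ)) = minpoly ℚ b := by
      rw [show ((b:ℂ)) = algebraMap ℝ ℂ b from rfl,
        minpoly.algebraMap_eq Complex.ofReal_injective]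
    have h2 : minpoly ℚ ((algebraMap E ℂ) bE) = minpoly ℚ bE :=
      minpoly.algebraMap_eq (algebraMap E ℂ).injective bE
    rw [hbEcoe, h1] at h2
    rw [← h2, hp]
  -- algebra homs send roots to roots
  have hmaps : ∀ (σ : E →ₐ[ℚ] ℂ) (x : E), Polynomial.aeval ((algebraMap E ℂ) x) p = 0 →
      Polynomial.aeval (σ x) p = 0 := by
    intro σ x hx
    have h0 : Polynomial.aeval x p = 0 := by
      apply (algebraMap E ℂ).injective
      rw [map_zero, ← hx]
      exact (Polynomial.aeval_algebraMap_apply ℂ x p).symm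
    rw [Polynomial.aeval_algHom_apply σ x p, h0, map_zero]
  -- existence of homs sending b to any prescribed root
  have hK' : ∀ s : E, IsIntegral ℚ s ∧ ((minpoly ℚ s).map (algebraMap ℚ ℂ)).Splits := by
    intro s
    exact ⟨(halg.isAlgebraic s).isIntegral, IsAlgClosed.splits _⟩
  have hexists : ∀ β : ℂ, Polynomial.aeval β p = 0 → ∃ σ : E →ₐ[ℚ] ℂ, σ bE = β := by
    intro β hβ
    exact IntermediateField.exists_algHom_of_splits_of_aeval hK' (by rw [hminbE]; exact hβ)
  -- Mfin inside E
  have hME : ∀ z ∈ Mfin, z ∈ E := by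
    intro z hz
    exact hrootE z ((hMfin_mem z).mp hz).1
  set ME : Finset E := Mfin.preimage (algebraMap E ℂ) ((algebraMap E ℂ).injective.injOn) with hMEdef
  have hMEmem : ∀ x : E, x ∈ ME ↔ (algebraMap E ℂ) x ∈ Mfin := by
    intro x; exact Finset.mem_preimage
  have hMEimage : ME.image (fun x => (algebraMap E ℂ) x) = Mfin := by
    apply Finset.Subset.antisymm
    · intro z hz
      rcases Finset.mem_image.mp hz with ⟨x, hx, rfl⟩
      exact (hMEmem x).mp hx
    · intro z hz
      exact Finset.mem_image.mpr ⟨⟨z, hME z hz⟩, (hMEmem _).mpr hz, rfl⟩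
  have hMEcard : ME.card = m := by
    rw [← hMcard, ← hMEimage]
    exact (Finset.card_image_of_injective _ (algebraMap E ℂ).injective).symm
  -- the key step : homs sending b into Mfin permute Mfin
  have hperm : ∀ σ : E →ₐ[ℚ] ℂ, σ bE ∈ Mfin → ∀ x ∈ ME, σ x ∈ Mfin := by
    intro σ hσb x hx
    have hz := (hMEmem x).mp hx
    obtain ⟨hzroot, hzabs⟩ := (hMfin_mem _).mp hz
    set z : ℂ := (algebraMap E ℂ) x with hzdef
    have hconjz : Polynomial.aeval ((starRingEnd ℂ) z) p = 0 := hconjroot z hzroot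
    set u : E := ⟨(starRingEnd ℂ) z, hrootE _ hconjz⟩ with hudef
    have hucoe : (algebraMap E ℂ) u = (starRingEnd ℂ) z := rfl
    have hxu : x * u = bE ^ 2 := by
      apply (algebraMap E ℂ).injective
      rw [map_mul, map_pow, hbEcoe, hucoe, ← hzdef]
      rw [Complex.mul_conj]
      rw [show Complex.normSq z = b ^ 2 by rw [← Complex.sq_norm, hzabs]]
      push_cast
      ring
    have habs : ‖σ x‖ * ‖σ u‖ = b ^ 2 := by
      have h1 := congrArg σ hxu
      rw [map_mul, map_pow] at h1
      have h2 := congrArg (‖·‖) h1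
      rw [norm_mul, norm_pow] at h2
      rw [h2, ((hMfin_mem _).mp hσb).2]
    have hx1 : ‖σ x‖ ≤ b := hroots _ ((memS _).mpr (hmaps σ x hzroot))
    have hu1 : ‖σ u‖ ≤ b := hroots _ ((memS _).mpr (hmaps σ u hconjz))
    have hxb : ‖σ x‖ = b := by
      have h3 : (0:ℝ) ≤ ‖σ x‖ := norm_nonneg _
      have h4 : (0:ℝ) ≤ ‖σ u‖ := norm_nonneg _
      nlinarith
    exact (hMfin_mem _).mpr ⟨hmaps σ x hzroot, hxb⟩
  -- image equality for such σ
  have himg : ∀ σ : E →ₐ[ℚ] ℂ, σ bE ∈ Mfin → ME.image (fun x => σ x) = Mfin := by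
    intro σ hσb
    apply Finset.eq_of_subset_of_card_le
    · intro w hw
      rcases Finset.mem_image.mp hw with ⟨x, hx, rfl⟩
      exact hperm σ hσb x hx
    · rw [Finset.card_image_of_injective _
        (show Function.Injective (fun x : E => σ x) from fun a c h => σ.toRingHom.injective h),
        hMEcard, hMcard]
  set Pc : ℂ := ∏ z ∈ Mfin, z with hPc
  have hprod : ∀ σ : E →ₐ[ℚ] ℂ, σ bE ∈ Mfin → σ (∏ x ∈ ME, x) = Pc := by
    intro σ hσb
    have hinj : ∀ x ∈ ME, ∀ y ∈ ME, σ x = σ y → x = y :=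
      fun x _ y _ h => σ.toRingHom.injective h
    rw [map_prod, hPc, ← himg σ hσb, Finset.prod_image hinj]
  -- Pc is real of modulus b^m
  have hconjM : Mfin.image (fun z => (starRingEnd ℂ) z) = Mfin := by
    apply Finset.eq_of_subset_of_card_le
    · intro w hw
      rcases Finset.mem_image.mp hw with ⟨x, hx, rfl⟩
      obtain ⟨h1, h2⟩ := (hMfin_mem x).mp hx
      refine (hMfin_mem _).mpr ⟨hconjroot x h1, ?_⟩
      rw [Complex.norm_conj]; exact h2
    · rw [Finset.card_image_of_injective _
        (show Function.Injective (fun z : ℂ => (starRingEnd ℂ) z) from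
          fun a c h => (starRingEnd ℂ).injective h)]
  have hPconj : (starRingEnd ℂ) Pc = Pc := by
    have hinj : ∀ x ∈ Mfin, ∀ y ∈ Mfin, (starRingEnd ℂ) x = (starRingEnd ℂ) y → x = y :=
      fun x _ y _ h => (starRingEnd ℂ).injective h
    rw [hPc, map_prod]
    conv_rhs => rw [← hconjM]
    rw [Finset.prod_image hinj]
  have hPabs : ‖Pc‖ = b ^ m := by
    rw [hPc, norm_prod]
    rw [Finset.prod_congr rfl (fun z hz => ((hMfin_mem z).mp hz).2)]
    rw [Finset.prod_const, hMcard]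
  have hPval : Pc = (b:ℂ) ^ m ∨ Pc = -((b:ℂ) ^ m) := by
    have h3 : Pc * Pc = ((b:ℂ) ^ m) ^ 2 := by
      calc Pc * Pc = Pc * (starRingEnd ℂ) Pc := by rw [hPconj]
      _ = ((Complex.normSq Pc : ℝ) : ℂ) := Complex.mul_conj Pc
      _ = ((b:ℂ) ^ m) ^ 2 := by
          rw [← Complex.sq_norm, hPabs]; push_cast; ring
    have h2 : (Pc - (b:ℂ) ^ m) * (Pc + (b:ℂ) ^ m) = 0 := by linear_combination h3
    rcases mul_eq_zero.mp h2 with h | h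
    · left; exact sub_eq_zero.mp h
    · right; exact eq_neg_of_add_eq_zero_left h
  obtain ⟨ec, eE, hec0, hPe, hσe⟩ : ∃ (ec : ℂ) (eE : E), ec ≠ 0 ∧ Pc = ec * (b:ℂ) ^ m ∧
      ∀ σ : E →ₐ[ℚ] ℂ, σ eE = ec := by
    rcases hPval with h | h
    · exact ⟨1, 1, one_ne_zero, by rw [h, one_mul], fun σ => map_one σ⟩
    · exact ⟨-1, -1, neg_ne_zero.mpr one_ne_zero, by rw [h]; ring,
        fun σ => by rw [map_neg, map_one]⟩
  have hvalbM : (E.val : E →ₐ[ℚ] ℂ) bE ∈ Mfin := hbM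
  have hrelE : (∏ x ∈ ME, x) = eE * bE ^ m := by
    apply (algebraMap E ℂ).injective
    have h1 : (algebraMap E ℂ) (∏ x ∈ ME, x) = Pc := hprod E.val hvalbM
    have h2 : (algebraMap E ℂ) eE = ec := hσe E.val
    rw [map_mul, map_pow, hbEcoe, h1, h2, hPe]
  -- every root of maximal modulus satisfies β^m = b^m
  have hpow : ∀ β ∈ Mfin, β ^ m = (b:ℂ) ^ m := by
    intro β hβ
    obtain ⟨hβroot, hβabs⟩ := (hMfin_mem β).mp hβ
    obtain ⟨σ, hσ⟩ := hexists β hβroot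
    have hσb : σ bE ∈ Mfin := by rw [hσ]; exact hβ
    have h1 := hprod σ hσb
    rw [hrelE, map_mul, map_pow, hσ, hσe σ, hPe] at h1
    exact mul_left_cancel₀ hec0 h1
  -- conversely, everything with w^m = b^m is a root of maximal modulus
  have hpowmem : ∀ w : ℂ, w ^ m = (b:ℂ) ^ m → w ∈ Mfin := by
    intro w hw
    by_contra hwn
    have hsub : insert w Mfin ⊆ (Polynomial.nthRoots m ((b:ℂ) ^ m)).toFinset := by
      intro t ht
      rcases Finset.mem_insert.mp ht with rfl | ht
      · rw [Multiset.mem_toFinset]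
        exact (Polynomial.mem_nthRoots (Nat.pos_of_ne_zero hm0)).mpr hw
      · rw [Multiset.mem_toFinset]
        exact (Polynomial.mem_nthRoots (Nat.pos_of_ne_zero hm0)).mpr (hpow t ht)
    have hc1 := Finset.card_le_card hsub
    rw [Finset.card_insert_of_notMem hwn, hMcard] at hc1
    have hc2 : ((Polynomial.nthRoots m ((b:ℂ) ^ m)).toFinset).card ≤ m :=
      le_trans (Multiset.toFinset_card_le _) (Polynomial.card_nthRoots m _)
    omega
  -- final step
  intro z hz
  have hzroot : Polynomial.aeval z p = 0 := (memS z).mp hz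
  obtain ⟨τ, hτ⟩ := hexists z hzroot
  have hωb : ∀ j : ℕ, (ω ^ j * (b:ℂ)) ∈ Mfin := by
    intro j
    apply hpowmem
    rw [mul_pow, ← pow_mul, mul_comm j m, pow_mul, hω.pow_eq_one, one_pow, one_mul]
  have hωE : ∀ j : ℕ, (ω ^ j : ℂ) ∈ E := by
    intro j
    have h1 : ((ω ^ j * (b:ℂ)) : ℂ) ∈ E := hME _ (hωb j)
    have h2 := mul_mem h1 (inv_mem hbE)
    rwa [mul_assoc, mul_inv_cancel₀ hbC0, mul_one] at h2
  set u : ℕ → E := fun j => ⟨(ω ^ j : ℂ), hωE j⟩ with hu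
  have hucoe : ∀ j, (algebraMap E ℂ) (u j) = ω ^ j := fun j => rfl
  have hum : ∀ j, (u j) ^ m = 1 := by
    intro j
    apply (algebraMap E ℂ).injective
    rw [map_pow, hucoe, map_one, ← pow_mul, mul_comm j m, pow_mul, hω.pow_eq_one, one_pow]
  have hτu : ∃ j, τ (u j) = ω := by
    set W : Finset ℂ := (Finset.range m).image (fun j => τ (u j)) with hW
    have hWsub : W ⊆ (Polynomial.nthRoots m (1:ℂ)).toFinset := by
      intro t ht
      rcases Finset.mem_image.mp ht with ⟨j, _, rfl⟩
      rw [Multiset.mem_toFinset]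
      refine (Polynomial.mem_nthRoots (Nat.pos_of_ne_zero hm0)).mpr ?_
      rw [← map_pow, hum j, map_one]
    have hWcard : W.card = m := by
      rw [hW, Finset.card_image_of_injOn, Finset.card_range]
      intro i hi j hj hij
      have h3 : (ω:ℂ) ^ i = ω ^ j := by
        have h4 := congrArg (algebraMap E ℂ) (τ.toRingHom.injective hij)
        simpa [hucoe] using h4
      exact hω.pow_inj (Finset.mem_range.mp hi) (Finset.mem_range.mp hj) h3
    have hWeq : W = (Polynomial.nthRoots m (1:ℂ)).toFinset := by
      apply Finset.eq_of_subset_of_card_le hWsub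
      rw [hWcard]
      exact le_trans (Multiset.toFinset_card_le _) (Polynomial.card_nthRoots m 1)
    have hωW : ω ∈ W := by
      rw [hWeq, Multiset.mem_toFinset]
      exact (Polynomial.mem_nthRoots (Nat.pos_of_ne_zero hm0)).mpr hω.pow_eq_one
    rcases Finset.mem_image.mp hωW with ⟨j, _, hj⟩
    exact ⟨j, hj⟩
  obtain ⟨j, hj⟩ := hτu
  have hmem : (algebraMap E ℂ) (u j * bE) ∈ Mfin := by
    rw [map_mul, hucoe, hbEcoe]; exact hωb j
  have hroot2 : Polynomial.aeval (τ (u j * bE)) p = 0 :=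
    hmaps τ _ ((hMfin_mem _).mp hmem).1
  rw [map_mul, hj, hτ] at hroot2
  exact (memS _).mpr hroot2
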